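/- Let m ≥ 1 and let Θ be an m×m real matrix; set A := I − Θ. Assume the kernel of the linear map x ↦ Ax on ℝ^m has dimension 1, and let v, κ ∈ ℝ^m be nonzero with Aᵀv = 0, Aκ = 0 and ⟨v, κ⟩ ≠ 0. Let a ∈ ℝ and c, t, w ∈ ℝ^m with ⟨v, t⟩ ≠ 0 and ⟨w, κ⟩ ≠ 0. Then there exists η > 0 such that for every real ε with 0 < |ε| < η the matrix A + εI is invertible and wᵀ(A + εI)^{−1}t ≠ 0, and ( a + cᵀ(A + εI)^{−1}t ) / ( wᵀ(A + εI)^{−1}t ) converges to ⟨c, κ⟩/⟨w, κ⟩ as ε → 0. -/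

import Mathlib

open Matrix Filter Topology

/-- intermediate ratio limit in the proof of Theorem 3.4.  With `A = I − Θ`,
`dim Ker A = 1`, `Aᵀv = 0`, `Aκ = 0`, `⟨v,κ⟩ ≠ 0`, and `⟨v,t⟩ ≠ 0`, `⟨w,κ⟩ ≠ 0`, there is
`η > 0` such that for `0 < |ε| < η` the matrix `A + εI` is invertible and
`wᵀ(A+εI)⁻¹t ≠ 0`, and `(a + cᵀ(A+εI)⁻¹t)/(wᵀ(A+εI)⁻¹t) → ⟨c,κ⟩/⟨w,κ⟩` as `ε → 0`. -/
theorem stmt_15 (m : ℕ) (hm : 1 ≤ m) (Θ : Matrix (Fin m) (Fin m) ℝ)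
    (A : Matrix (Fin m) (Fin m) ℝ) (hA : A = 1 - Θ)
    (hker : Module.finrank ℝ (LinearMap.ker A.mulVecLin) = 1)
    (v κ : Fin m → ℝ) (hv : v ≠ 0) (hκ : κ ≠ 0)
    (hvA : Aᵀ *ᵥ v = 0) (hκA : A *ᵥ κ = 0) (hvκ : v ⬝ᵥ κ ≠ 0)
    (a : ℝ) (c t w : Fin m → ℝ) (hvt : v ⬝ᵥ t ≠ 0) (hwκ : w ⬝ᵥ κ ≠ 0) :
    (∃ η : ℝ, 0 < η ∧ ∀ ε : ℝ, 0 < |ε| → |ε| < η →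
      IsUnit (A + ε • (1 : Matrix (Fin m) (Fin m) ℝ)) ∧
      w ⬝ᵥ ((A + ε • (1 : Matrix (Fin m) (Fin m) ℝ))⁻¹ *ᵥ t) ≠ 0) ∧
    Tendsto (fun ε : ℝ =>
        (a + c ⬝ᵥ ((A + ε • (1 : Matrix (Fin m) (Fin m) ℝ))⁻¹ *ᵥ t)) /
          (w ⬝ᵥ ((A + ε • (1 : Matrix (Fin m) (Fin m) ℝ))⁻¹ *ᵥ t)))
      (𝓝[≠] 0) (𝓝 ((c ⬝ᵥ κ) / (w ⬝ᵥ κ))) := by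
  classical
  -- determinant of `A` vanishes
  have hdet : A.det = 0 := by
    rw [← Matrix.exists_mulVec_eq_zero_iff]
    exact ⟨κ, hκ, hκA⟩
  -- kernel of `A` is the span of `κ`
  have hkerA : LinearMap.ker A.mulVecLin = Submodule.span ℝ {κ} := by
    symm
    apply Submodule.eq_of_le_of_finrank_le
    · rw [Submodule.span_le, Set.singleton_subset_iff, SetLike.mem_coe, LinearMap.mem_ker,
        Matrix.mulVecLin_apply]
      exact hκA
    · rw [hker, finrank_span_singleton hκ]
  -- rank of `A` is `m - 1`
  have hrank : A.rank + 1 = m := by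
    have h1 := A.mulVecLin.finrank_range_add_finrank_ker
    rw [hker] at h1
    simpa [Matrix.rank] using h1
  -- kernel of `Aᵀ` has dimension 1, and equals the span of `v`
  have hkerT1 : Module.finrank ℝ (LinearMap.ker Aᵀ.mulVecLin) = 1 := by
    have h1 := Aᵀ.mulVecLin.finrank_range_add_finrank_ker
    have h2 : Aᵀ.rank = A.rank := A.rank_transpose
    have h3 : Aᵀ.rank + Module.finrank ℝ (LinearMap.ker Aᵀ.mulVecLin) = m := by
      simpa [Matrix.rank] using h1
    omega
  have hkerAT : LinearMap.ker Aᵀ.mulVecLin = Submodule.span ℝ {v} := by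
    symm
    apply Submodule.eq_of_le_of_finrank_le
    · rw [Submodule.span_le, Set.singleton_subset_iff, SetLike.mem_coe, LinearMap.mem_ker,
        Matrix.mulVecLin_apply]
      exact hvA
    · rw [hkerT1, finrank_span_singleton hv]
  -- adjugate structure
  have hmul : A * A.adjugate = 0 := by rw [Matrix.mul_adjugate, hdet, zero_smul]
  have hmul' : A.adjugate * A = 0 := by rw [Matrix.adjugate_mul, hdet, zero_smul]
  have hcol : ∀ j, ∃ r : ℝ, (fun i => A.adjugate i j) = r • κ := by
    intro j
    have hmem : (fun i => A.adjugate i j) ∈ LinearMap.ker A.mulVecLin := by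
      rw [LinearMap.mem_ker]
      funext i
      have h1 : (A * A.adjugate) i j = 0 := by rw [hmul]; rfl
      simpa [Matrix.mul_apply, Matrix.mulVecLin_apply, Matrix.mulVec, dotProduct] using h1
    rw [hkerA, Submodule.mem_span_singleton] at hmem
    obtain ⟨r, hr⟩ := hmem
    exact ⟨r, hr.symm⟩
  have hrow : ∀ i, ∃ q : ℝ, (fun j => A.adjugate i j) = q • v := by
    intro i
    have hmem : (fun j => A.adjugate i j) ∈ LinearMap.ker Aᵀ.mulVecLin := by
      rw [LinearMap.mem_ker]
      funext j
      have h1 : (A.adjugate * A) i j = 0 := by rw [hmul']; rfl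
      simp only [Matrix.mul_apply] at h1
      simp only [Matrix.mulVecLin_apply, Matrix.mulVec, dotProduct, Matrix.transpose_apply,
        Pi.zero_apply]
      rw [← h1]
      exact Finset.sum_congr rfl fun k _ => mul_comm _ _
    rw [hkerAT, Submodule.mem_span_singleton] at hmem
    obtain ⟨q, hq⟩ := hmem
    exact ⟨q, hq.symm⟩
  obtain ⟨i0, hi0⟩ : ∃ i, κ i ≠ 0 := by
    by_contra h
    push_neg at h
    exact hκ (funext fun i => h i)
  obtain ⟨j0, hj0⟩ : ∃ j, v j ≠ 0 := by
    by_contra h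
    push_neg at h
    exact hv (funext fun j => h j)
  -- the corresponding adjugate entry is nonzero
  have hadj0 : A.adjugate i0 j0 ≠ 0 := by
    rw [Matrix.adjugate_apply]
    intro hzero
    obtain ⟨x, hx, hbx⟩ := (Matrix.exists_mulVec_eq_zero_iff).2 hzero
    -- compute: row j0 of updated matrix is `Pi.single i0 1`
    have hxj0 : x i0 = 0 := by
      have h1 : (A.updateRow j0 (Pi.single i0 1) *ᵥ x) j0 = 0 := by rw [hbx]; rfl
      simpa [Matrix.mulVec, Matrix.updateRow_self, single_dotProduct] using h1
    have hAx : ∀ k, k ≠ j0 → (A *ᵥ x) k = 0 := by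
      intro k hk
      have h1 : (A.updateRow j0 (Pi.single i0 1) *ᵥ x) k = 0 := by rw [hbx]; rfl
      simpa [Matrix.mulVec, Matrix.updateRow_ne hk] using h1
    have hvAx : v ⬝ᵥ (A *ᵥ x) = 0 := by
      rw [Matrix.dotProduct_mulVec, ← Matrix.mulVec_transpose, hvA, zero_dotProduct]
    have hAxj0 : (A *ᵥ x) j0 = 0 := by
      have h1 : v ⬝ᵥ (A *ᵥ x) = v j0 * (A *ᵥ x) j0 := by
        rw [dotProduct]
        rw [Finset.sum_eq_single j0]
        · intro k _ hk
          rw [hAx k hk, mul_zero]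
        · intro h; exact absurd (Finset.mem_univ j0) h
      rw [hvAx] at h1
      exact (mul_eq_zero.1 h1.symm).resolve_left hj0
    have hAx0 : A *ᵥ x = 0 := by
      funext k
      by_cases hk : k = j0
      · rw [hk]; exact hAxj0
      · exact hAx k hk
    have hxker : x ∈ LinearMap.ker A.mulVecLin := by
      rw [LinearMap.mem_ker, Matrix.mulVecLin_apply]; exact hAx0
    rw [hkerA, Submodule.mem_span_singleton] at hxker
    obtain ⟨r, hr⟩ := hxker
    have hr0 : r = 0 := by
      have h6 := congrFun hr i0
      simp only [Pi.smul_apply, smul_eq_mul] at h6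
      have h7 : r * κ i0 = 0 := by rw [h6]; exact hxj0
      exact (mul_eq_zero.1 h7).resolve_right hi0
    rw [hr0, zero_smul] at hr
    exact hx hr.symm
  set s : ℝ := A.adjugate i0 j0 / (κ i0 * v j0) with hs
  have hsne : s ≠ 0 := div_ne_zero hadj0 (mul_ne_zero hi0 hj0)
  have hstruct : ∀ i j, A.adjugate i j = s * (κ i * v j) := by
    intro i j
    obtain ⟨r, hr⟩ := hcol j
    obtain ⟨q0, hq0⟩ := hrow i0
    have e1 : A.adjugate i j = r * κ i := by
      have := congrFun hr i; simpa using this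
    have e2 : A.adjugate i0 j = r * κ i0 := by
      have := congrFun hr i0; simpa using this
    have e3 : A.adjugate i0 j = q0 * v j := by
      have := congrFun hq0 j; simpa using this
    have e4 : A.adjugate i0 j0 = q0 * v j0 := by
      have := congrFun hq0 j0; simpa using this
    rw [e1, hs, e4]
    field_simp
    have h5 : r * κ i0 = q0 * v j := by rw [← e2, e3]
    linear_combination κ i * h5
  -- action of the adjugate
  have hadjt : A.adjugate *ᵥ t = (s * (v ⬝ᵥ t)) • κ := by
    funext i
    simp only [Matrix.mulVec, dotProduct, Pi.smul_apply, smul_eq_mul]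
    calc (∑ j, A.adjugate i j * t j) = ∑ j, (s * κ i) * (v j * t j) := by
          refine Finset.sum_congr rfl fun j _ => ?_
          rw [hstruct i j]; ring
      _ = (s * κ i) * ∑ j, v j * t j := by rw [← Finset.mul_sum]
      _ = s * (∑ j, v j * t j) * κ i := by ring
  -- the characteristic polynomial of `-A`
  set p : Polynomial ℝ := (-A).charpoly with hp
  have hpev : ∀ ε : ℝ, p.eval ε = (A + ε • (1 : Matrix (Fin m) (Fin m) ℝ)).det := by
    intro ε
    have h8 := RingHom.map_det (Polynomial.evalRingHom ε) (Matrix.charmatrix (-A))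
    simp only [Polynomial.coe_evalRingHom] at h8
    rw [hp, Matrix.charpoly, h8]
    congr 1
    funext i j
    simp only [RingHom.mapMatrix_apply, Matrix.map_apply, Matrix.charmatrix_apply,
      Polynomial.coe_evalRingHom, Polynomial.eval_sub, Polynomial.eval_C,
      Matrix.add_apply, Matrix.neg_apply, Matrix.smul_apply, smul_eq_mul]
    by_cases hij : i = j
    · subst hij
      simp [Matrix.diagonal_apply_eq, Matrix.one_apply_eq]
      ring
    · simp [Matrix.diagonal_apply_ne _ hij, Matrix.one_apply_ne hij]
  have hpne : p ≠ 0 := (Matrix.charpoly_monic (-A)).ne_zero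
  -- choose η₁ avoiding nonzero roots of p
  set R : Finset ℝ := p.roots.toFinset.erase 0 with hR
  set η₁ : ℝ := if h : R.Nonempty then R.inf' h (fun x => |x|) else 1 with hη₁
  have hη₁pos : 0 < η₁ := by
    rw [hη₁]
    split_ifs with h
    · rw [Finset.lt_inf'_iff]
      intro b hb
      have hb0 : b ≠ 0 := Finset.ne_of_mem_erase hb
      exact abs_pos.2 hb0
    · norm_num
  have hpne' : ∀ ε : ℝ, 0 < |ε| → |ε| < η₁ → p.eval ε ≠ 0 := by
    intro ε hε hεη heval
    have hε0 : ε ≠ 0 := abs_pos.1 hε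
    have hrme : ε ∈ R := by
      rw [hR, Finset.mem_erase]
      refine ⟨hε0, ?_⟩
      rw [Multiset.mem_toFinset, Polynomial.mem_roots hpne]
      exact heval
    have hne : R.Nonempty := ⟨ε, hrme⟩
    have : η₁ ≤ |ε| := by
      rw [hη₁, dif_pos hne]
      exact Finset.inf'_le _ hrme
    linarith
  -- continuity facts
  have hMcont : Continuous fun ε : ℝ => A + ε • (1 : Matrix (Fin m) (Fin m) ℝ) :=
    continuous_const.add (continuous_id.smul continuous_const)
  have hGwcont : Continuous fun ε : ℝ =>
      w ⬝ᵥ ((A + ε • (1 : Matrix (Fin m) (Fin m) ℝ)).adjugate *ᵥ t) :=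
    continuous_const.dotProduct (hMcont.matrix_adjugate.matrix_mulVec continuous_const)
  have hGccont : Continuous fun ε : ℝ =>
      c ⬝ᵥ ((A + ε • (1 : Matrix (Fin m) (Fin m) ℝ)).adjugate *ᵥ t) :=
    continuous_const.dotProduct (hMcont.matrix_adjugate.matrix_mulVec continuous_const)
  have hpcont : Continuous fun ε : ℝ => p.eval ε := p.continuous
  have hM0 : A + (0 : ℝ) • (1 : Matrix (Fin m) (Fin m) ℝ) = A := by simp
  have hGw0 : w ⬝ᵥ ((A + (0:ℝ) • (1 : Matrix (Fin m) (Fin m) ℝ)).adjugate *ᵥ t)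
      = s * (v ⬝ᵥ t) * (w ⬝ᵥ κ) := by
    rw [hM0, hadjt, dotProduct_smul, smul_eq_mul]
  have hGc0 : c ⬝ᵥ ((A + (0:ℝ) • (1 : Matrix (Fin m) (Fin m) ℝ)).adjugate *ᵥ t)
      = s * (v ⬝ᵥ t) * (c ⬝ᵥ κ) := by
    rw [hM0, hadjt, dotProduct_smul, smul_eq_mul]
  have hGw0ne : w ⬝ᵥ ((A + (0:ℝ) • (1 : Matrix (Fin m) (Fin m) ℝ)).adjugate *ᵥ t) ≠ 0 := by
    rw [hGw0]
    exact mul_ne_zero (mul_ne_zero hsne hvt) hwκ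
  -- choose η₂ where Gw is nonzero
  have hev : ∀ᶠ ε in 𝓝 (0:ℝ),
      w ⬝ᵥ ((A + ε • (1 : Matrix (Fin m) (Fin m) ℝ)).adjugate *ᵥ t) ≠ 0 :=
    hGwcont.continuousAt.eventually_ne hGw0ne
  obtain ⟨η₂, hη₂pos, hη₂⟩ := Metric.eventually_nhds_iff.1 hev
  set η : ℝ := min η₁ η₂ with hη
  have hηpos : 0 < η := lt_min hη₁pos hη₂pos
  -- key invertibility facts for 0 < |ε| < η
  have hdetne : ∀ ε : ℝ, 0 < |ε| → |ε| < η →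
      (A + ε • (1 : Matrix (Fin m) (Fin m) ℝ)).det ≠ 0 := by
    intro ε h1 h2
    rw [← hpev]
    exact hpne' ε h1 (lt_of_lt_of_le h2 (min_le_left _ _))
  have hGwne : ∀ ε : ℝ, |ε| < η →
      w ⬝ᵥ ((A + ε • (1 : Matrix (Fin m) (Fin m) ℝ)).adjugate *ᵥ t) ≠ 0 := by
    intro ε h2
    apply hη₂
    rw [Real.dist_eq, sub_zero]
    exact lt_of_lt_of_le h2 (min_le_right _ _)
  have hkey : ∀ ε : ℝ, (A + ε • (1 : Matrix (Fin m) (Fin m) ℝ)).det ≠ 0 → ∀ x : Fin m → ℝ,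
      x ⬝ᵥ ((A + ε • (1 : Matrix (Fin m) (Fin m) ℝ))⁻¹ *ᵥ t) =
      ((A + ε • (1 : Matrix (Fin m) (Fin m) ℝ)).det)⁻¹ *
        (x ⬝ᵥ ((A + ε • (1 : Matrix (Fin m) (Fin m) ℝ)).adjugate *ᵥ t)) := by
    intro ε hd x
    rw [Matrix.inv_def, Ring.inverse_eq_inv', Matrix.smul_mulVec,
      dotProduct_smul, smul_eq_mul]
  constructor
  · -- first conjunct
    refine ⟨η, hηpos, fun ε h1 h2 => ?_⟩
    have hd := hdetne ε h1 h2
    constructor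
    · rw [Matrix.isUnit_iff_isUnit_det]
      exact isUnit_iff_ne_zero.2 hd
    · rw [hkey ε hd w]
      exact mul_ne_zero (inv_ne_zero hd) (hGwne ε h2)
  · -- the limit
    have hFlim : Tendsto (fun ε : ℝ =>
        (a * p.eval ε + c ⬝ᵥ ((A + ε • (1 : Matrix (Fin m) (Fin m) ℝ)).adjugate *ᵥ t)) /
          (w ⬝ᵥ ((A + ε • (1 : Matrix (Fin m) (Fin m) ℝ)).adjugate *ᵥ t)))
        (𝓝 0) (𝓝 ((c ⬝ᵥ κ) / (w ⬝ᵥ κ))) := by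
      have hnum : Tendsto (fun ε : ℝ =>
          a * p.eval ε + c ⬝ᵥ ((A + ε • (1 : Matrix (Fin m) (Fin m) ℝ)).adjugate *ᵥ t))
          (𝓝 0) (𝓝 (a * p.eval 0 +
            c ⬝ᵥ ((A + (0:ℝ) • (1 : Matrix (Fin m) (Fin m) ℝ)).adjugate *ᵥ t))) :=
        ((continuous_const.mul hpcont).add hGccont).tendsto 0
      have hden : Tendsto (fun ε : ℝ =>
          w ⬝ᵥ ((A + ε • (1 : Matrix (Fin m) (Fin m) ℝ)).adjugate *ᵥ t))
          (𝓝 0) (𝓝 (w ⬝ᵥ ((A + (0:ℝ) • (1 : Matrix (Fin m) (Fin m) ℝ)).adjugate *ᵥ t))) :=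
        hGwcont.tendsto 0
      have hp0 : p.eval 0 = 0 := by rw [hpev 0, hM0, hdet]
      have heq : (a * p.eval 0 +
          c ⬝ᵥ ((A + (0:ℝ) • (1 : Matrix (Fin m) (Fin m) ℝ)).adjugate *ᵥ t)) /
          (w ⬝ᵥ ((A + (0:ℝ) • (1 : Matrix (Fin m) (Fin m) ℝ)).adjugate *ᵥ t)) =
          (c ⬝ᵥ κ) / (w ⬝ᵥ κ) := by
        rw [hp0, mul_zero, zero_add, hGc0, hGw0]
        rw [mul_div_mul_left _ _ (mul_ne_zero hsne hvt)]
      rw [← heq]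
      exact hnum.div hden hGw0ne
    have hFlim' : Tendsto (fun ε : ℝ =>
        (a * p.eval ε + c ⬝ᵥ ((A + ε • (1 : Matrix (Fin m) (Fin m) ℝ)).adjugate *ᵥ t)) /
          (w ⬝ᵥ ((A + ε • (1 : Matrix (Fin m) (Fin m) ℝ)).adjugate *ᵥ t)))
        (𝓝[≠] 0) (𝓝 ((c ⬝ᵥ κ) / (w ⬝ᵥ κ))) :=
      hFlim.mono_left nhdsWithin_le_nhds
    apply hFlim'.congr'
    have habs : ∀ᶠ ε in 𝓝 (0:ℝ), |ε| < η := by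
      have := Metric.ball_mem_nhds (0:ℝ) hηpos
      filter_upwards [this] with ε hε
      rwa [Metric.mem_ball, Real.dist_eq, sub_zero] at hε
    filter_upwards [eventually_nhdsWithin_of_eventually_nhds habs, self_mem_nhdsWithin]
      with ε hεη hεne
    have h1 : 0 < |ε| := abs_pos.2 hεne
    have hd := hdetne ε h1 hεη
    have hGw := hGwne ε hεη
    rw [hkey ε hd c, hkey ε hd w, hpev ε]
    set d := (A + ε • (1 : Matrix (Fin m) (Fin m) ℝ)).det
    set gc := c ⬝ᵥ ((A + ε • (1 : Matrix (Fin m) (Fin m) ℝ)).adjugate *ᵥ t)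
    set gw := w ⬝ᵥ ((A + ε • (1 : Matrix (Fin m) (Fin m) ℝ)).adjugate *ᵥ t)
    field_simp
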